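/- arXiv:1301.7724 — 2 statements merged into one kernel-verified Lean document; each statement's English description precedes it below -/
import Mathlib

section
/- The nonreciprocal clustering output is a valid ultrametric: u^{NR}_X(x,x') = max(ũ^{NR}_X(x,x'), ũ^{NR}_X(x',x)) satisfies symmetry, the identity property (u^{NR}_X(x,x') = 0 iff x = x'), and the strong triangle inequality u^{NR}_X(x,x') ≤ max(u^{NR}_X(x,x''), u^{NR}_X(x'',x')). -/
/-- Maximum dissimilarity over consecutive links of a chain (list of nodes). -/
def listCost {X : Type*} (A : X → X → ℝ) (l : List X) : ℝ :=
  (l.zip l.tail).foldr (fun p r => max (A p.1 p.2) r) 0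

/-- Minimum over chains from `x` to `x'` of the maximum link cost. -/
noncomputable def minChainCost {X : Type*} (A : X → X → ℝ) (x x' : X) : ℝ :=
  sInf {c : ℝ | ∃ l : List X, l.head? = some x ∧ l.getLast? = some x' ∧ listCost A l = c}

/-- Symmetrized dissimilarity Ā. -/
def symDis {X : Type*} (A : X → X → ℝ) (x x' : X) : ℝ := max (A x x') (A x' x)

/-- Reciprocal ultrametric. -/
noncomputable def uR {X : Type*} (A : X → X → ℝ) (x x' : X) : ℝ := minChainCost (symDis A) x x'

/-- Nonreciprocal ultrametric. -/
noncomputable def uNR {X : Type*} (A : X → X → ℝ) (x x' : X) : ℝ :=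
  max (minChainCost A x x') (minChainCost A x' x)

/-- A (finite, asymmetric) network dissimilarity: nonnegative, vanishing exactly on the diagonal. -/
def IsNetwork {X : Type*} (A : X → X → ℝ) : Prop :=
  (∀ x x', 0 ≤ A x x') ∧ (∀ x x', A x x' = 0 ↔ x = x')

/-- Ultrametric: nonnegative, symmetric, identity of indiscernibles, strong triangle inequality. -/
def IsUltra {X : Type*} (u : X → X → ℝ) : Prop :=
  (∀ x x', 0 ≤ u x x') ∧ (∀ x x', u x x' = u x' x) ∧
  (∀ x x', u x x' = 0 ↔ x = x') ∧
  (∀ x x' x'', u x x' ≤ max (u x x'') (u x'' x'))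

section Aux
variable {X : Type*} (A : X → X → ℝ)

lemma listCost_single (a : X) : listCost A [a] = 0 := rfl
lemma listCost_cons_cons (a b : X) (t : List X) :
    listCost A (a :: b :: t) = max (A a b) (listCost A (b :: t)) := rfl

lemma listCost_nonneg (l : List X) : 0 ≤ listCost A l := by
  unfold listCost
  induction (l.zip l.tail) with
  | nil => simp
  | cons p t ih => exact le_max_of_le_right ih

lemma listCost_mem (l : List X) :
    listCost A l ∈ insert (0:ℝ) (Set.range fun p : X × X => A p.1 p.2) := by
  unfold listCost
  induction (l.zip l.tail) with
  | nil => simp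
  | cons p t ih =>
    rcases max_cases (A p.1 p.2) (t.foldr (fun p r => max (A p.1 p.2) r) 0) with ⟨h, _⟩ | ⟨h, _⟩
    · simp only [List.foldr_cons, h]
      exact Set.mem_insert_of_mem _ ⟨p, rfl⟩
    · simpa only [List.foldr_cons, h] using ih

def chainSet (x x' : X) : Set ℝ :=
  {c : ℝ | ∃ l : List X, l.head? = some x ∧ l.getLast? = some x' ∧ listCost A l = c}

lemma chainSet_nonempty (x x' : X) : (chainSet A x x').Nonempty :=
  ⟨listCost A [x, x'], [x, x'], rfl, rfl, rfl⟩

lemma chainSet_bddBelow (x x' : X) : BddBelow (chainSet A x x') := by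
  refine ⟨0, fun c hc => ?_⟩
  obtain ⟨l, _, _, rfl⟩ := hc
  exact listCost_nonneg A l

lemma chainSet_finite (x x' : X) [Fintype X] : (chainSet A x x').Finite := by
  apply Set.Finite.subset ((Set.finite_range fun p : X × X => A p.1 p.2).insert 0)
  rintro c ⟨l, _, _, rfl⟩
  exact listCost_mem A l

lemma minChainCost_le {x x' : X} {l : List X} (h1 : l.head? = some x)
    (h2 : l.getLast? = some x') : minChainCost A x x' ≤ listCost A l :=
  csInf_le (chainSet_bddBelow A x x') ⟨l, h1, h2, rfl⟩

lemma minChainCost_nonneg (x x' : X) : 0 ≤ minChainCost A x x' := by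
  apply le_csInf (chainSet_nonempty A x x')
  rintro c ⟨l, _, _, rfl⟩
  exact listCost_nonneg A l

lemma minChainCost_mem [Fintype X] (x x' : X) :
    minChainCost A x x' ∈ chainSet A x x' :=
  (chainSet_nonempty A x x').csInf_mem (chainSet_finite A x x')

lemma minChainCost_self (x : X) : minChainCost A x x = 0 := by
  refine le_antisymm ?_ (minChainCost_nonneg A x x)
  have := minChainCost_le A (l := [x]) rfl rfl
  simpa [listCost_single] using this

lemma listCost_append (hA0 : ∀ a : X, A a a = 0) :
    ∀ (l1 : List X) (l2 : List X) (y : X), l1.getLast? = some y → l2.head? = some y →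
      listCost A (l1 ++ l2) ≤ max (listCost A l1) (listCost A l2) := by
  intro l1
  induction l1 with
  | nil => intro l2 y h _; simp at h
  | cons a t ih =>
    intro l2 y h1 h2
    cases t with
    | nil =>
      simp at h1; subst h1
      cases l2 with
      | nil => simp at h2
      | cons b t2 =>
        simp at h2
        subst h2
        rw [List.singleton_append, listCost_cons_cons, hA0,
          max_eq_right (listCost_nonneg A _)]
        exact le_max_right _ _
    | cons b t' =>
      rw [List.getLast?_cons_cons] at h1
      have := ih l2 y h1 h2
      calc listCost A ((a :: b :: t') ++ l2)
          = max (A a b) (listCost A ((b :: t') ++ l2)) := rfl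
        _ ≤ max (A a b) (max (listCost A (b :: t')) (listCost A l2)) := by
            exact max_le_max le_rfl this
        _ = max (listCost A (a :: b :: t')) (listCost A l2) := by
            rw [listCost_cons_cons, max_assoc]

lemma minChainCost_triangle [Fintype X] (hA0 : ∀ a : X, A a a = 0) (x x' x'' : X) :
    minChainCost A x x' ≤ max (minChainCost A x x'') (minChainCost A x'' x') := by
  obtain ⟨l1, h11, h12, hc1⟩ := minChainCost_mem A x x''
  obtain ⟨l2, h21, h22, hc2⟩ := minChainCost_mem A x'' x'
  have hl2ne : l2 ≠ [] := by rintro rfl; simp at h21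
  have hhead : (l1 ++ l2).head? = some x := by
    cases l1 with
    | nil => simp at h11
    | cons a t => simp at h11; simp [h11]
  have hlast : (l1 ++ l2).getLast? = some x' := by
    rw [List.getLast?_append_of_ne_nil l1 hl2ne]; exact h22
  calc minChainCost A x x' ≤ listCost A (l1 ++ l2) := minChainCost_le A hhead hlast
    _ ≤ max (listCost A l1) (listCost A l2) := listCost_append A hA0 l1 l2 x'' h12 h21
    _ = _ := by rw [hc1, hc2]

lemma minChainCost_pos [Fintype X] (hA : ∀ a b : X, 0 ≤ A a b)
    (hA0 : ∀ a b : X, A a b = 0 ↔ a = b) {x x' : X} (hne : x ≠ x') :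
    0 < minChainCost A x x' := by
  classical
  set s : Finset (X × X) := Finset.univ.filter (fun p : X × X => p.1 ≠ p.2) with hs
  have hsne : s.Nonempty := ⟨(x, x'), by rw [hs]; exact Finset.mem_filter.mpr ⟨Finset.mem_univ _, hne⟩⟩
  set δ : ℝ := s.inf' hsne (fun p => A p.1 p.2) with hδ
  have hδpos : 0 < δ := by
    rw [hδ, Finset.lt_inf'_iff]
    intro p hp
    simp only [hs, Finset.mem_filter, Finset.mem_univ, true_and] at hp
    exact lt_of_le_of_ne (hA p.1 p.2) fun h => hp ((hA0 p.1 p.2).mp h.symm)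
  have hδle : ∀ a b : X, a ≠ b → δ ≤ A a b := by
    intro a b hab
    have hab' : (a, b) ∈ s := by
      rw [hs]; exact Finset.mem_filter.mpr ⟨Finset.mem_univ _, hab⟩
    exact Finset.inf'_le (fun p => A p.1 p.2) hab'
  have key : ∀ (l : List X) (y : X), l.head? = some y → l.getLast? = some x' → y ≠ x' →
      δ ≤ listCost A l := by
    intro l
    induction l with
    | nil => intro y h _ _; simp at h
    | cons a t ih =>
      intro y h1 h2 hyne
      simp at h1; subst h1
      cases t with
      | nil => simp at h2; exact absurd h2 hyne
      | cons b t' =>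
        rw [List.getLast?_cons_cons] at h2
        by_cases hab : a = b
        · subst hab
          rw [listCost_cons_cons]
          exact le_max_of_le_right (ih a rfl h2 hyne)
        · rw [listCost_cons_cons]
          exact le_max_of_le_left (hδle a b hab)
  refine lt_of_lt_of_le hδpos ?_
  obtain ⟨l, h1, h2, hc⟩ := minChainCost_mem A x x'
  rw [← hc]
  exact key l x h1 h2 hne

end Aux


theorem nonreciprocal_is_ultrametric {X : Type*} [Fintype X] (A : X → X → ℝ)
    (hA : IsNetwork A) :
    (∀ x x' : X, uNR A x x' = uNR A x' x) ∧
    (∀ x x' : X, uNR A x x' = 0 ↔ x = x') ∧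
    (∀ x x' x'' : X, uNR A x x' ≤ max (uNR A x x'') (uNR A x'' x')) := by
  obtain ⟨hpos, hzero⟩ := hA
  have hA0 : ∀ a : X, A a a = 0 := fun a => (hzero a a).mpr rfl
  refine ⟨?_, ?_, ?_⟩
  · intro x x'
    simp only [uNR]
    exact max_comm _ _
  · intro x x'
    constructor
    · intro h
      by_contra hne
      have hp := minChainCost_pos A hpos hzero hne
      have hle : minChainCost A x x' ≤ uNR A x x' := le_max_left _ _
      rw [h] at hle
      linarith
    · rintro rfl
      simp [uNR, minChainCost_self]
  · intro x x' x''
    simp only [uNR]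
    apply max_le
    · exact le_trans (minChainCost_triangle A hA0 x x' x'')
        (max_le_max (le_max_left _ _) (le_max_left _ _))
    · refine le_trans (minChainCost_triangle A hA0 x' x x'') ?_
      apply max_le
      · exact le_trans (le_max_right _ _) (le_max_right _ _)
      · exact le_trans (le_max_right _ _) (le_max_left _ _)
end

section
/- Nonreciprocal clustering satisfies the Axiom of Value: for a two-node network X = {p, q} with A_X(p,q) = α and A_X(q,p) = β, the nonreciprocal ultrametric satisfies u^{NR}_X(p,q) = max(α, β). -/
lemma listCost_cons_cons_s5 {X : Type*} (A : X → X → ℝ) (x y : X) (l : List X) :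
    listCost A (x :: y :: l) = max (A x y) (listCost A (y :: l)) := by
  simp [listCost]

lemma cost_ge {X : Type*} (A : X → X → ℝ) (h0 : ∀ x x', 0 ≤ A x x')
    (hdiag : ∀ x, A x x = 0) (p q : X) (hpq : p ≠ q) (htwo : ∀ x : X, x = p ∨ x = q) :
    ∀ l : List X, l.head? = some p → l.getLast? = some q → A p q ≤ listCost A l := by
  intro l
  induction l with
  | nil => intro h; simp at h
  | cons x rest ih =>
    intro hh hl
    simp at hh
    subst hh
    match rest with
    | [] =>
      simp at hl
      exact absurd hl hpq
    | y :: rest' =>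
      rw [listCost_cons_cons_s5]
      rcases htwo y with hy | hy
      · subst hy
        rw [List.getLast?_cons_cons] at hl
        have := ih (by simp) hl
        exact le_trans this (le_max_right _ _)
      · subst hy
        exact le_max_left _ _

lemma minChainCost_eq {X : Type*} (A : X → X → ℝ) (h0 : ∀ x x', 0 ≤ A x x')
    (hdiag : ∀ x, A x x = 0) (p q : X) (hpq : p ≠ q) (htwo : ∀ x : X, x = p ∨ x = q) :
    minChainCost A p q = A p q := by
  have hmem : A p q ∈ {c : ℝ | ∃ l : List X, l.head? = some p ∧ l.getLast? = some q ∧ listCost A l = c} := by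
    refine ⟨[p, q], by simp, by simp, ?_⟩
    simp [listCost, max_eq_left (h0 p q)]
  have hlb : ∀ c ∈ {c : ℝ | ∃ l : List X, l.head? = some p ∧ l.getLast? = some q ∧ listCost A l = c}, A p q ≤ c := by
    rintro c ⟨l, hh, hl, rfl⟩
    exact cost_ge A h0 hdiag p q hpq htwo l hh hl
  exact le_antisymm (csInf_le ⟨A p q, hlb⟩ hmem) (le_csInf ⟨_, hmem⟩ hlb)

theorem nonreciprocal_axiom_of_value {X : Type*} [Fintype X] (A : X → X → ℝ)
    (hA : IsNetwork A) (p q : X) (hpq : p ≠ q) (htwo : ∀ x : X, x = p ∨ x = q)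
    (α β : ℝ) (hα : A p q = α) (hβ : A q p = β) :
    uNR A p q = max α β := by
  obtain ⟨h0, hd⟩ := hA
  have hdiag : ∀ x, A x x = 0 := fun x => (hd x x).mpr rfl
  rw [uNR, minChainCost_eq A h0 hdiag p q hpq htwo,
    minChainCost_eq A h0 hdiag q p hpq.symm (fun x => (htwo x).symm), hα, hβ]
end
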